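/- Let (X,σ) be a subshift, let Y ⊆ X be the closure of the set of aperiodic points of X, and let φ₁,…,φ_m ∈ Aut(X) be automorphisms whose restrictions to Y are the identity. Then the set S := {x ∈ X : ψ(x) ≠ x for at least one ψ in the subgroup ⟨φ₁,…,φ_m⟩} is finite, and consequently the subgroup ⟨φ₁,…,φ_m⟩ of Aut(X) is finite. In particular, the kernel of the restriction homomorphism Aut(X) → Aut(Y) is locally finite (every finitely generated subgroup is finite), hence amenable. -/

import Mathlib

open Filter Topology Pointwise

section Defs

variable {A : Type*}

/-- The left shift on bi-infinite sequences over `A`. -/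
def shift (x : ℤ → A) : ℤ → A := fun i => x (i + 1)

/-- The word `w` occurs in `x` at position `j`. -/
def OccursAt {n : ℕ} (x : ℤ → A) (w : Fin n → A) (j : ℤ) : Prop :=
  ∀ i : Fin n, x (j + (i : ℤ)) = w i

/-- The word `w` belongs to the language of `X`. -/
def InLanguage (X : Set (ℤ → A)) {n : ℕ} (w : Fin n → A) : Prop :=
  ∃ x ∈ X, OccursAt x w 0

/-- The complexity function of `X`: the number of words of length `n` in the language. -/
noncomputable def complexity (X : Set (ℤ → A)) (n : ℕ) : ℕ :=
  {w : Fin n → A | InLanguage X w}.ncard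

/-- `x` is aperiodic: no positive shift fixes it. -/
def IsAperiodic (x : ℤ → A) : Prop := ∀ p : ℤ, 0 < p → (fun i => x (i + p)) ≠ x

/-- The subshift obtained from `X` by forbidding the word `w`. -/
def Forbid (X : Set (ℤ → A)) {n : ℕ} (w : Fin n → A) : Set (ℤ → A) :=
  {x ∈ X | ∀ j : ℤ, ¬ OccursAt x w j}

/-- `w` extends uniquely `L` times to the right and left in the language of `X`. -/
def ExtendsUniquely (X : Set (ℤ → A)) {n : ℕ} (w : Fin n → A) (L : ℕ) : Prop :=
  ∃! u : Fin (n + 2 * L) → A,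
    InLanguage X u ∧ ∀ i : Fin n, u ⟨L + (i : ℕ), by have := i.isLt; omega⟩ = w i

variable [TopologicalSpace A]

/-- The automorphism group of a subshift `X`: permutations of `X` which are homeomorphisms
and commute with the shift. -/
def Aut (X : Set (ℤ → A)) : Subgroup (Equiv.Perm ↥X) where
  carrier := {φ | Continuous ⇑φ ∧ Continuous ⇑φ.symm ∧
    (∀ x y : ↥X, shift (x : ℤ → A) = (y : ℤ → A) →
      shift ((φ x : ℤ → A)) = ((φ y : ℤ → A))) ∧
    (∀ x y : ↥X, shift (x : ℤ → A) = (y : ℤ → A) →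
      shift ((φ.symm x : ℤ → A)) = ((φ.symm y : ℤ → A)))}
  one_mem' := ⟨continuous_id, continuous_id, fun _ _ h => h, fun _ _ h => h⟩
  mul_mem' := by
    rintro a b ⟨hac, hac', haσ, haσ'⟩ ⟨hbc, hbc', hbσ, hbσ'⟩
    refine ⟨?_, ?_, ?_, ?_⟩
    · simpa using hac.comp hbc
    · simpa [Equiv.Perm.mul_def] using hbc'.comp hac'
    · intro x y h
      simpa using haσ _ _ (hbσ x y h)
    · intro x y h
      simpa [Equiv.Perm.mul_def] using hbσ' _ _ (haσ' x y h)
  inv_mem' := by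
    rintro a ⟨hac, hac', haσ, haσ'⟩
    exact ⟨hac', by simpa [Equiv.Perm.inv_def] using hac, fun x y h => haσ' x y h, fun x y h => by simpa [Equiv.Perm.inv_def] using haσ x y h⟩

/-- `f` is a block code of range `R` representing `φ`. -/
def IsBlockCode (X : Set (ℤ → A)) (R : ℕ) (φ : Equiv.Perm ↥X)
    (f : (Fin (2 * R + 1) → A) → A) : Prop :=
  ∀ (x : ↥X) (i : ℤ), (φ x : ℤ → A) i = f (fun j => (x : ℤ → A) (i + (j : ℤ) - R))

/-- `Aut_R(X)`: automorphisms such that both they and their inverses are given by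
sliding block codes of range `R`. -/
def AutR (X : Set (ℤ → A)) (R : ℕ) : Set (Equiv.Perm ↥X) :=
  {φ | φ ∈ Aut X ∧ (∃ f, IsBlockCode X R φ f) ∧ (∃ g, IsBlockCode X R φ⁻¹ g)}

end Defs

/-- Apply a block code of range `R` to a word, shortening it by `2R`. -/
def applyCode {A : Type*} {R n : ℕ} (f : (Fin (2 * R + 1) → A) → A) (w : Fin n → A) :
    Fin (n - 2 * R) → A :=
  fun i => f (fun j => w ⟨(i : ℕ) + (j : ℕ), by have := i.isLt; have := j.isLt; omega⟩)

section Defs2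

variable {A : Type*} [TopologicalSpace A]

/-- `φ` preserves occurrences of `v`. -/
def PreservesOcc (X : Set (ℤ → A)) (φ : Equiv.Perm ↥X) {n : ℕ} (v : Fin n → A) : Prop :=
  ∀ x : ↥X, OccursAt (x : ℤ → A) v 0 → OccursAt ((φ x : ℤ → A)) v 0

/-- `φ` preserves occurrences of `v` which are at least `D` units away from any occurrence of
the words `u 0, …, u (i-1)`. -/
def PreservesOccAway (X : Set (ℤ → A)) (φ : Equiv.Perm ↥X) {n : ℕ} (v : Fin n → A)
    (D : ℕ) (ml : ℕ → ℕ) (u : ∀ t, Fin (ml t) → A) (i : ℕ) : Prop :=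
  ∀ x : ↥X, OccursAt (x : ℤ → A) v 0 →
    (∀ t < i, ∀ p : ℤ, -(D : ℤ) ≤ p → p + ml t ≤ n + D → ¬ OccursAt (x : ℤ → A) (u t) p) →
    OccursAt ((φ x : ℤ → A)) v 0

end Defs2

/-- A countable discrete group is amenable if it admits a Følner sequence. -/
def FolnerAmenable (G : Type*) [Group G] : Prop :=
  ∃ F : ℕ → Set G, (∀ k, (F k).Finite) ∧
    (∀ g : G, ∀ᶠ k in atTop, g ∈ F k) ∧
    ∀ g : G, Tendsto (fun k => ((symmDiff (g • F k) (F k)).ncard : ℝ) / ((F k).ncard : ℝ))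
      atTop (𝓝 0)

/-- The kernel of the restriction homomorphism `Aut(X) → Aut(Y)`: automorphisms of `X`
whose restriction to `Y` is the identity. -/
def restKernel {A : Type*} [TopologicalSpace A] (X Y : Set (ℤ → A)) :
    Subgroup (Equiv.Perm ↥X) where
  carrier := {φ | φ ∈ Aut X ∧ ∀ x : ↥X, (x : ℤ → A) ∈ Y → φ x = x}
  one_mem' := ⟨(Aut X).one_mem, fun _ _ => rfl⟩
  mul_mem' := by
    rintro a b ⟨ha, ha'⟩ ⟨hb, hb'⟩
    refine ⟨(Aut X).mul_mem ha hb, fun x hx => ?_⟩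
    simp [Equiv.Perm.mul_apply, hb' x hx, ha' x hx]
  inv_mem' := by
    rintro a ⟨ha, ha'⟩
    refine ⟨(Aut X).inv_mem ha, fun x hx => ?_⟩
    have h1 : a x = x := ha' x hx
    rw [Equiv.Perm.inv_def, Equiv.symm_apply_eq]
    exact h1.symm

section Helpers
variable {A : Type*}

/-- periodic point: value invariant under adding multiples of the period -/
lemma per_mul {x : ℤ → A} {q : ℤ} (h : ∀ i, x (i + q) = x i) :
    ∀ (k : ℤ) (i : ℤ), x (i + q * k) = x i := by
  intro k
  induction k using Int.induction_on with
  | zero => simp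
  | succ k ih =>
               intro i
               have := h (i + q * k)
               rw [ih] at this
               rw [← this]; ring_nf
  | pred k ih =>
               intro i
               have h2 := ih (i - q)
               rw [show i - q + q * (-(k:ℤ)) = i + q * (-(k:ℤ)-1) by ring] at h2
               rw [h2]
               have := h (i - q)
               rw [show i - q + q = i by ring] at this
               exact this.symm

lemma per_congr {x : ℤ → A} {q : ℤ} (h : ∀ i, x (i + q) = x i) {j j' : ℤ}
    (hd : q ∣ j - j') : x j = x j' := by
  obtain ⟨k, hk⟩ := hd
  have := per_mul h k j'
  rw [show j' + q * k = j by omega] at this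
  exact this

lemma not_aperiodic_iff {x : ℤ → A} :
    ¬ IsAperiodic x ↔ ∃ p : ℤ, 0 < p ∧ ∀ i, x (i + p) = x i := by
  unfold IsAperiodic
  push_neg
  constructor
  · rintro ⟨p, hp, he⟩; exact ⟨p, hp, fun i => congrFun he i⟩
  · rintro ⟨p, hp, he⟩; exact ⟨p, hp, funext he⟩

variable {X : Set (ℤ → A)}

lemma shift_mem (hX_inv : shift '' X = X) {x : ℤ → A} (hx : x ∈ X) : shift x ∈ X := by
  rw [← hX_inv]; exact ⟨x, hx, rfl⟩

lemma unshift_mem (hX_inv : shift '' X = X) {x : ℤ → A} (hx : x ∈ X) :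
    (fun i => x (i - 1)) ∈ X := by
  rw [← hX_inv] at hx
  obtain ⟨x', hx', hs⟩ := hx
  have : (fun i : ℤ => x (i - 1)) = x' := by
    funext i
    rw [← hs]
    show x' (i - 1 + 1) = x' i
    norm_num
  rw [this]; exact hx'

lemma shiftZ_mem (hX_inv : shift '' X = X) {x : ℤ → A} (hx : x ∈ X) (k : ℤ) :
    (fun i => x (i + k)) ∈ X := by
  induction k using Int.induction_on with
  | zero => simpa using hx
  | succ k ih =>
      have := shift_mem hX_inv ih
      have e : shift (fun i => x (i + k)) = fun i => x (i + (k + 1)) := by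
        funext i; show x (i + 1 + k) = _; ring_nf
      rwa [e] at this
  | pred k ih =>
      have := unshift_mem hX_inv ih
      have e : (fun i => (fun j => x (j + -(k:ℤ))) (i - 1)) = fun i => x (i + (-(k:ℤ) - 1)) := by
        funext i; show x (i - 1 + -(k:ℤ)) = _; ring_nf
      rwa [e] at this

lemma aperiodic_shiftZ {x : ℤ → A} (h : IsAperiodic x) (k : ℤ) :
    IsAperiodic (fun i => x (i + k)) := by
  intro p hp he
  refine h p hp ?_
  funext j
  have := congrFun he (j - k)
  simpa [show j - k + p + k = j + p by ring, show j - k + k = j by ring] using this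

end Helpers

section Topo
variable {A : Type*} [Fintype A] [TopologicalSpace A] [DiscreteTopology A]
variable {X : Set (ℤ → A)}

lemma ulim (hX_cl : IsClosed X) (U : Ultrafilter ℕ) (v : ℕ → (ℤ → A)) (hv : ∀ n, v n ∈ X) :
    ∃ z ∈ X, ∀ i, ∀ᶠ n in (U : Filter ℕ), v n i = z i := by
  have hc : IsCompact X := hX_cl.isCompact
  have hle : (U.map v : Filter (ℤ → A)) ≤ Filter.principal X := by
    rw [Filter.le_principal_iff]
    exact Filter.mem_map.2 (Filter.univ_mem' (fun n => hv n))
  obtain ⟨z, hzX, hz⟩ := hc.ultrafilter_le_nhds (U.map v) hle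
  refine ⟨z, hzX, fun i => ?_⟩
  have ht : Filter.Tendsto v (U : Filter ℕ) (nhds z) := hz
  have ht2 : Filter.Tendsto (fun n => v n i) (U : Filter ℕ) (nhds (z i)) :=
    ((continuous_apply i).tendsto z).comp ht
  rw [nhds_discrete, tendsto_pure] at ht2
  exact ht2

lemma uf_pigeon {β : Type*} (U : Ultrafilter ℕ) (s : Finset β) (f : ℕ → β)
    (hf : ∀ᶠ n in (U : Filter ℕ), f n ∈ s) : ∃ c ∈ s, ∀ᶠ n in (U : Filter ℕ), f n = c := by
  classical
  induction s using Finset.induction_on with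
  | empty =>
      obtain ⟨n, hn⟩ := hf.exists
      simp at hn
  | @insert a s ha ih =>
      have : {n | f n = a} ∪ {n | f n ∈ s} ∈ U := by
        filter_upwards [hf] with n hn
        simp only [Finset.mem_insert] at hn
        exact hn.imp id id
      rcases Ultrafilter.union_mem_iff.1 this with h | h
      · exact ⟨a, Finset.mem_insert_self a s, h⟩
      · obtain ⟨c, hc, hev⟩ := ih h
        exact ⟨c, Finset.mem_insert_of_mem hc, hev⟩

/-- K1: uniform radius of a continuous map, base version at coordinate 0 -/
lemma exists_radius (hX_cl : IsClosed X) (φ : Equiv.Perm ↥X) (hc : Continuous (⇑φ : ↥X → ↥X)) :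
    ∃ R : ℕ, ∀ x y : ↥X, (∀ i : ℤ, |i| ≤ (R : ℤ) → (x : ℤ → A) i = (y : ℤ → A) i) →
      (φ x : ℤ → A) 0 = (φ y : ℤ → A) 0 := by
  classical
  haveI : CompactSpace ↥X := isCompact_iff_compactSpace.1 hX_cl.isCompact
  set g : ↥X → A := fun y => (φ y : ℤ → A) 0 with hg
  have hgc : Continuous g := (continuous_apply (0:ℤ)).comp (continuous_subtype_val.comp hc)
  -- for each x, find a radius N x such that agreement on [-N, N] forces g-equality
  have hloc : ∀ x : ↥X, ∃ N : ℕ, ∀ y : ↥X,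
      (∀ i : ℤ, |i| ≤ (N : ℤ) → (y : ℤ → A) i = (x : ℤ → A) i) → g y = g x := by
    intro x
    have hmem : {y : ↥X | g y = g x} ∈ nhds x := by
      have : IsOpen {y : ↥X | g y = g x} := hgc.isOpen_preimage {g x} (isOpen_discrete _)
      exact this.mem_nhds rfl
    -- nhds in subtype of pi
    rw [nhds_subtype] at hmem
    obtain ⟨S, hS, hsub⟩ := hmem
    rw [nhds_pi, Filter.mem_pi] at hS
    obtain ⟨I, hIfin, V, hV, hVS⟩ := hS
    obtain ⟨J, hJ⟩ := hIfin.exists_finset_coe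
    refine ⟨(J.sup fun i => i.natAbs), fun y hy => ?_⟩
    apply hsub
    apply hVS
    intro i hi
    have hiJ : i ∈ J := by rwa [← Finset.mem_coe, hJ]
    have : |i| ≤ ((J.sup fun i => i.natAbs : ℕ) : ℤ) := by
      have h2 := Finset.le_sup (f := fun i : ℤ => i.natAbs) hiJ
      rw [Int.abs_eq_natAbs]
      exact_mod_cast h2
    have := hy i this
    show (y : ℤ → A) i ∈ V i
    rw [this]
    have := hV i
    rwa [nhds_discrete, Filter.mem_pure] at this
  choose N hN using hloc
  -- compactness
  have hcov : (Set.univ : Set ↥X) ⊆ ⋃ x : ↥X, {y : ↥X | ∀ i : ℤ, |i| ≤ (N x : ℤ) →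
      (y : ℤ → A) i = (x : ℤ → A) i} := by
    intro x _
    exact Set.mem_iUnion.2 ⟨x, fun i _ => rfl⟩
  have hopen : ∀ x : ↥X, IsOpen {y : ↥X | ∀ i : ℤ, |i| ≤ (N x : ℤ) →
      (y : ℤ → A) i = (x : ℤ → A) i} := by
    intro x
    have : {y : ↥X | ∀ i : ℤ, |i| ≤ (N x : ℤ) → (y : ℤ → A) i = (x : ℤ → A) i} =
        ⋂ i ∈ {i : ℤ | |i| ≤ (N x : ℤ)}, {y : ↥X | (y : ℤ → A) i = (x : ℤ → A) i} := by
      ext y; simp [Set.mem_iInter]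
    rw [this]
    have hfin : {i : ℤ | |i| ≤ (N x : ℤ)}.Finite := by
      have : {i : ℤ | |i| ≤ (N x : ℤ)} ⊆ Set.Icc (-(N x : ℤ)) (N x : ℤ) := by
        intro i hi; simp only [Set.mem_setOf_eq] at hi; rw [Set.mem_Icc]; exact abs_le.1 hi
      exact (Set.finite_Icc _ _).subset this
    refine hfin.isOpen_biInter (fun i _ => ?_)
    have : Continuous fun y : ↥X => (y : ℤ → A) i := (continuous_apply i).comp continuous_subtype_val
    exact (this.isOpen_preimage {(x : ℤ → A) i} (isOpen_discrete _))
  obtain ⟨t, ht⟩ := isCompact_univ.elim_finite_subcover _ hopen hcov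
  refine ⟨t.sup N, fun x y hxy => ?_⟩
  obtain ⟨c, hct, hxc⟩ := Set.mem_iUnion₂.1 (ht (Set.mem_univ x))
  have hNc : (N c : ℤ) ≤ ((t.sup N : ℕ) : ℤ) := by exact_mod_cast Finset.le_sup hct
  have hyc : ∀ i : ℤ, |i| ≤ (N c : ℤ) → (y : ℤ → A) i = (c : ℤ → A) i := by
    intro i hi
    rw [← (hxy i (le_trans hi hNc)), hxc i hi]
  have h1 : g x = g c := hN c x hxc
  have h2 : g y = g c := hN c y hyc
  exact h1.trans h2.symm

end Topo


set_option linter.unusedSectionVars false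
set_option linter.unusedVariables false
section Main

variable {A : Type*} [Fintype A] [TopologicalSpace A] [DiscreteTopology A]
variable {X : Set (ℤ → A)}

/-- K2: equivariance of automorphisms under all integer shifts -/
lemma aut_equivariant (hX_inv : shift '' X = X) (φ : Equiv.Perm ↥X) (hφ : φ ∈ Aut X) :
    ∀ (k : ℤ) (x y : ↥X), (∀ i, (y : ℤ → A) i = (x : ℤ → A) (i + k)) →
      ∀ i, (φ y : ℤ → A) i = (φ x : ℤ → A) (i + k) := by
  obtain ⟨-, -, hstep, -⟩ := hφ
  intro k
  induction k using Int.induction_on with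
  | zero =>
      intro x y h i
      have : y = x := Subtype.ext (funext fun i => by simpa using h i)
      rw [this]; simp
  | succ k ih =>
      intro x y h i
      have hx1 : shift (x : ℤ → A) ∈ X := shift_mem hX_inv x.2
      set x1 : ↥X := ⟨shift (x : ℤ → A), hx1⟩ with hx1def
      have hs := hstep x x1 rfl
      have hyx1 : ∀ i, (y : ℤ → A) i = (x1 : ℤ → A) (i + k) := by
        intro i
        show (y : ℤ → A) i = (x : ℤ → A) (i + k + 1)
        rw [h i]; ring_nf
      have := ih x1 y hyx1 i
      rw [this]
      have := congrFun hs (i + k)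
      show (φ x1 : ℤ → A) (i + k) = (φ x : ℤ → A) (i + (k + 1))
      rw [← this]
      show (φ x : ℤ → A) (i + k + 1) = _
      ring_nf
  | pred k ih =>
      intro x y h i
      have hy1 : shift (y : ℤ → A) ∈ X := shift_mem hX_inv y.2
      set y1 : ↥X := ⟨shift (y : ℤ → A), hy1⟩ with hy1def
      have hs := hstep y y1 rfl
      have hy1x : ∀ i, (y1 : ℤ → A) i = (x : ℤ → A) (i + -(k : ℤ)) := by
        intro i
        show (y : ℤ → A) (i + 1) = (x : ℤ → A) (i + -(k : ℤ))
        rw [h (i + 1)]; ring_nf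
      have h2 := ih x y1 hy1x (i - 1)
      have h3 := congrFun hs (i - 1)
      show (φ y : ℤ → A) i = _
      have : (φ y : ℤ → A) i = (φ y1 : ℤ → A) (i - 1) := by
        rw [← h3]; show _ = (φ y : ℤ → A) (i - 1 + 1); norm_num
      rw [this, h2]
      ring_nf

/-- K1': radius property at arbitrary position -/
lemma radius_at (hX_cl : IsClosed X) (hX_inv : shift '' X = X)
    (φ : Equiv.Perm ↥X) (hφ : φ ∈ Aut X) {R : ℕ}
    (hR : ∀ x y : ↥X, (∀ i : ℤ, |i| ≤ (R : ℤ) → (x : ℤ → A) i = (y : ℤ → A) i) →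
      (φ x : ℤ → A) 0 = (φ y : ℤ → A) 0)
    (x y : ↥X) (j : ℤ)
    (h : ∀ i : ℤ, |i| ≤ (R : ℤ) → (x : ℤ → A) (j + i) = (y : ℤ → A) (j + i)) :
    (φ x : ℤ → A) j = (φ y : ℤ → A) j := by
  have hxj : (fun i => (x : ℤ → A) (i + j)) ∈ X := shiftZ_mem hX_inv x.2 j
  have hyj : (fun i => (y : ℤ → A) (i + j)) ∈ X := shiftZ_mem hX_inv y.2 j
  set xj : ↥X := ⟨_, hxj⟩
  set yj : ↥X := ⟨_, hyj⟩
  have ex := aut_equivariant hX_inv φ hφ j x xj (fun i => rfl) 0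
  have ey := aut_equivariant hX_inv φ hφ j y yj (fun i => rfl) 0
  have hagree : ∀ i : ℤ, |i| ≤ (R : ℤ) → (xj : ℤ → A) i = (yj : ℤ → A) i := by
    intro i hi
    show (x : ℤ → A) (i + j) = (y : ℤ → A) (i + j)
    have := h i hi
    rwa [add_comm j i] at this
  have h0 := hR xj yj hagree
  have : (φ x : ℤ → A) j = (φ xj : ℤ → A) 0 := by rw [ex]; norm_num
  rw [this, h0, ey]; norm_num

lemma Y_subset_X (hX_cl : IsClosed X) {Y : Set (ℤ → A)}
    (hY : Y = closure {x | x ∈ X ∧ IsAperiodic x}) : Y ⊆ X := by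
  rw [hY]
  exact closure_minimal (fun x hx => hx.1) hX_cl

lemma Y_shift_inv (hX_inv : shift '' X = X) {Y : Set (ℤ → A)}
    (hY : Y = closure {x | x ∈ X ∧ IsAperiodic x}) {y : ℤ → A} (hy : y ∈ Y) (k : ℤ) :
    (fun i => y (i + k)) ∈ Y := by
  subst hY
  set AP := {x | x ∈ X ∧ IsAperiodic x} with hAP
  have hcont : Continuous (fun (x : ℤ → A) => (fun i => x (i + k))) := by
    apply continuous_pi
    intro i
    exact continuous_apply (i + k)
  have h1 : (fun i => y (i + k)) ∈ (fun (x : ℤ → A) => (fun i => x (i + k))) '' closure AP :=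
    ⟨y, hy, rfl⟩
  have h2 := image_closure_subset_closure_image (s := AP) hcont h1
  refine closure_mono ?_ h2
  rintro _ ⟨x, ⟨hxX, hxap⟩, rfl⟩
  exact ⟨shiftZ_mem hX_inv hxX k, aperiodic_shiftZ hxap k⟩

/-- K3: if every window of x is seen in Y, then φ fixes x -/
lemma fix_of_windows (hX_cl : IsClosed X) (hX_inv : shift '' X = X)
    {Y : Set (ℤ → A)} (hY : Y = closure {x | x ∈ X ∧ IsAperiodic x})
    (φ : Equiv.Perm ↥X) (hφ : φ ∈ restKernel X Y) {R : ℕ}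
    (hR : ∀ x y : ↥X, (∀ i : ℤ, |i| ≤ (R : ℤ) → (x : ℤ → A) i = (y : ℤ → A) i) →
      (φ x : ℤ → A) 0 = (φ y : ℤ → A) 0)
    (x : ↥X)
    (h : ∀ j : ℤ, ∃ y ∈ Y, ∀ i : ℤ, |i| ≤ (R : ℤ) → y i = (x : ℤ → A) (j + i)) :
    φ x = x := by
  obtain ⟨hAut, hfix⟩ := hφ
  apply Subtype.ext
  funext j
  obtain ⟨y, hyY, hagree⟩ := h j
  have hyX : y ∈ X := Y_subset_X hX_cl hY hyY
  set ys : ↥X := ⟨y, hyX⟩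
  -- shift x by j
  have hxj : (fun i => (x : ℤ → A) (i + j)) ∈ X := shiftZ_mem hX_inv x.2 j
  set xj : ↥X := ⟨_, hxj⟩
  have ex := aut_equivariant hX_inv φ hAut j x xj (fun i => rfl) 0
  have h0 : (φ xj : ℤ → A) 0 = (φ ys : ℤ → A) 0 := by
    apply hR
    intro i hi
    show (x : ℤ → A) (i + j) = y i
    rw [hagree i hi, add_comm j i]
  have hfy : φ ys = ys := hfix ys hyY
  have : (φ x : ℤ → A) j = (φ xj : ℤ → A) 0 := by rw [ex]; norm_num
  rw [this, h0, hfy]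
  show y 0 = (x : ℤ → A) j
  have := hagree 0 (by simp)
  simpa using this

/-- Claim A: a word seen in no point of Y occurs (at position 0) in only finitely many
periodic points of X. -/
lemma claimA (hX_cl : IsClosed X) (hX_inv : shift '' X = X)
    {Y : Set (ℤ → A)} (hY : Y = closure {x | x ∈ X ∧ IsAperiodic x})
    {L : ℕ} (hL : 0 < L) (w : Fin L → A)
    (hbad : ∀ y ∈ Y, ¬ OccursAt y w 0) :
    {x | x ∈ X ∧ (∃ p : ℤ, 0 < p ∧ ∀ i, x (i + p) = x i) ∧ OccursAt x w 0}.Finite := by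
  classical
  by_contra hfin
  have hinf : {x | x ∈ X ∧ (∃ p : ℤ, 0 < p ∧ ∀ i, x (i + p) = x i) ∧ OccursAt x w 0}.Infinite :=
    hfin
  set e := hinf.natEmbedding with he
  set xs : ℕ → (ℤ → A) := fun n => (e n : ℤ → A) with hxs
  have hxs_inj : Function.Injective xs := fun a b hab => e.injective (Subtype.ext hab)
  have hmem : ∀ n, xs n ∈ X := fun n => (e n).2.1
  have hper : ∀ n, ∃ p : ℤ, 0 < p ∧ ∀ i, xs n (i + p) = xs n i := fun n => (e n).2.2.1
  have hocc : ∀ n, OccursAt (xs n) w 0 := fun n => (e n).2.2.2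
  set U : Ultrafilter ℕ := Ultrafilter.of Filter.atTop with hUdef
  have hUcf : (U : Filter ℕ) ≤ Filter.cofinite := by
    rw [Nat.cofinite_eq_atTop]; exact Ultrafilter.of_le _
  have hNe : ∀ z : ℤ → A, ∀ᶠ n in (U : Filter ℕ), xs n ≠ z := by
    intro z
    apply hUcf
    rw [Filter.mem_cofinite]
    have hsub : {n | xs n ≠ z}ᶜ.Subsingleton := by
      intro a ha b hb
      simp only [Set.mem_compl_iff, Set.mem_setOf_eq, not_not] at ha hb
      exact hxs_inj (ha.trans hb.symm)
    exact hsub.finite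
  obtain ⟨z, hzX, hz⟩ := ulim hX_cl U xs hmem
  have hz_occ : OccursAt z w 0 := by
    intro t
    obtain ⟨n, hn⟩ := (hz (0 + (t : ℤ))).exists
    rw [← hn]; exact hocc n t
  by_cases hap : IsAperiodic z
  · exact hbad z (by rw [hY]; exact subset_closure ⟨hzX, hap⟩) hz_occ
  rw [not_aperiodic_iff] at hap
  obtain ⟨q, hq0, hqper⟩ := hap
  have h0agree : ∀ n, xs n 0 = z 0 := by
    intro n
    have h1 := hocc n ⟨0, hL⟩
    have h2 := hz_occ ⟨0, hL⟩
    simp only [Fin.val_mk, Int.ofNat_eq_coe, Nat.cast_zero, add_zero] at h1 h2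
    simpa using h1.trans h2.symm
  have hex : ∀ n, xs n ≠ z → ∃ m : ℕ, xs n ((m : ℤ) + 1) ≠ z ((m : ℤ) + 1) := by
    intro n hne
    by_contra hc
    push_neg at hc
    apply hne
    funext i
    obtain ⟨p, hp0, hpper⟩ := hper n
    have hxper : ∀ i, xs n (i + p * q) = xs n i := fun i => per_mul hpper q i
    have hzper : ∀ i, z (i + p * q) = z i := fun i => by
      have := per_mul hqper p i
      rwa [show i + q * p = i + p * q by ring] at this
    set k : ℤ := |i| + 1 with hk
    have hk0 : 0 ≤ k := by have := abs_nonneg i; omega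
    have hpq : 1 ≤ p * q := mul_pos hp0 hq0
    have hkk : k ≤ p * q * k := le_mul_of_one_le_left hk0 hpq
    have hik : 1 ≤ i + p * q * k := by
      have := neg_abs_le i
      linarith
    set j : ℤ := i + p * q * k with hj
    have e1 : xs n i = xs n j := (per_mul hxper k i).symm
    have e2 : z j = z i := per_mul hzper k i
    have e3 : xs n j = z j := by
      have hcast : ((j - 1).toNat : ℤ) = j - 1 := Int.toNat_of_nonneg (by omega)
      have := hc (j - 1).toNat
      rwa [hcast, show j - 1 + 1 = j by ring] at this
    rw [e1, e3, e2]
  set b : ℕ → ℕ := fun n =>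
    if h : ∃ m : ℕ, xs n ((m : ℤ) + 1) ≠ z ((m : ℤ) + 1) then Nat.find h else 0 with hbdef
  have hb_eq : ∀ n (hne : xs n ≠ z), b n = Nat.find (hex n hne) := by
    intro n hne
    simp only [hbdef]
    rw [dif_pos (hex n hne)]
  have hb_agree : ∀ n, xs n ≠ z → ∀ j : ℤ, 0 ≤ j → j ≤ (b n : ℤ) → xs n j = z j := by
    intro n hne j hj0 hjb
    rcases eq_or_lt_of_le hj0 with h0 | hpos
    · rw [← h0]; exact h0agree n
    · have hbn := hb_eq n hne
      have hcast : ((j - 1).toNat : ℤ) = j - 1 := Int.toNat_of_nonneg (by omega)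
      have hlt : (j - 1).toNat < Nat.find (hex n hne) := by omega
      have := Nat.find_min (hex n hne) hlt
      rw [not_not] at this
      rwa [hcast, show j - 1 + 1 = j by ring] at this
  have hb_dis : ∀ n, xs n ≠ z → xs n ((b n : ℤ) + 1) ≠ z ((b n : ℤ) + 1) := by
    intro n hne
    rw [hb_eq n hne]
    exact Nat.find_spec (hex n hne)
  have hb_tend : ∀ N : ℕ, ∀ᶠ n in (U : Filter ℕ), N ≤ b n := by
    intro N
    have hev : ∀ᶠ n in (U : Filter ℕ), ∀ m ∈ Finset.range (N + 2), xs n ((m : ℕ) : ℤ) = z (m : ℤ) := by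
      rw [eventually_all_finset]
      intro m _
      exact hz (m : ℤ)
    filter_upwards [hev, hNe z] with n hn hne
    by_contra hlt
    push_neg at hlt
    apply hb_dis n hne
    have h1 := hn (b n + 1) (Finset.mem_range.2 (by omega))
    push_cast at h1
    exact h1
  obtain ⟨r, hrmem, hrev⟩ := uf_pigeon U (Finset.Ico (0 : ℤ) q) (fun n => (b n : ℤ) % q)
      (Filter.Eventually.of_forall (fun n => by
        rw [Finset.mem_Ico]
        exact ⟨Int.emod_nonneg _ (by omega), Int.emod_lt_of_pos _ hq0⟩))
  rw [Finset.mem_Ico] at hrmem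
  set ys : ℕ → (ℤ → A) := fun n => fun i => xs n (i + b n) with hysdef
  have hysmem : ∀ n, ys n ∈ X := fun n => shiftZ_mem hX_inv (hmem n) (b n)
  obtain ⟨w', hw'X, hw'⟩ := ulim hX_cl U ys hysmem
  set z' : ℤ → A := fun i => z (i + r) with hz'def
  have hz'per : ∀ i, z' (i + q) = z' i := fun i => by
    show z (i + q + r) = z (i + r)
    have := hqper (i + r)
    rwa [show i + r + q = i + q + r by ring] at this
  have hdvd : ∀ n, (b n : ℤ) % q = r → q ∣ (b n : ℤ) - r := by
    intro n hn
    have := Int.mul_ediv_add_emod (b n : ℤ) q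
    exact ⟨(b n : ℤ) / q, by omega⟩
  have hleft : ∀ i : ℤ, i ≤ 0 → w' i = z' i := by
    intro i hi
    obtain ⟨n, h1, h2, h3, h4⟩ :=
      (((hw' i).and ((hb_tend (-i).toNat).and ((hNe z).and hrev)))).exists
    rw [← h1]
    show ys n i = z' i
    have hbni : -i ≤ (b n : ℤ) := by omega
    have e1 : ys n i = z (i + b n) := hb_agree n h3 (i + b n) (by omega) (by omega)
    rw [e1]
    exact per_congr hqper (by
      have := hdvd n h4
      have heq : (i + (b n : ℤ)) - (i + r) = (b n : ℤ) - r := by ring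
      rw [heq]; exact this)
  have hne1 : w' 1 ≠ z' 1 := by
    obtain ⟨n, h1, h2, h3⟩ := ((hw' 1).and ((hNe z).and hrev)).exists
    rw [← h1]
    have e1 : ys n 1 = xs n ((b n : ℤ) + 1) := by
      show xs n (1 + b n) = _
      rw [show (1 : ℤ) + b n = (b n : ℤ) + 1 by ring]
    rw [e1]
    intro hcontra
    apply hb_dis n h2
    rw [hcontra]
    show z (1 + r) = z ((b n : ℤ) + 1)
    exact per_congr hqper (by
      have := hdvd n h3
      obtain ⟨u, hu⟩ := this
      exact ⟨-u, by linear_combination -hu⟩)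
  have hw'ap : IsAperiodic w' := by
    intro p hp heq
    have hper' : ∀ i, w' (i + p) = w' i := fun i => congrFun heq i
    have hpq : 0 < p * q := mul_pos hp hq0
    have h1 : w' (1 + p * (-q)) = w' 1 := per_mul hper' (-q) 1
    have h2 : w' (1 + p * (-q)) = z' (1 + p * (-q)) := hleft _ (by linarith)
    have h3 : z' (1 + p * (-q)) = z' 1 := per_congr hz'per ⟨-p, by ring⟩
    exact hne1 (by rw [← h1, h2, h3])
  set c : ℤ := (r - ((L : ℤ) - 1)) % q with hcdef
  have hc0 : 0 ≤ c := Int.emod_nonneg _ (by omega)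
  have hcq : c < q := Int.emod_lt_of_pos _ hq0
  have hcd : q ∣ (r - ((L : ℤ) - 1)) - c := by
    have := Int.mul_ediv_add_emod (r - ((L : ℤ) - 1)) q
    exact ⟨(r - ((L : ℤ) - 1)) / q, by omega⟩
  set s0 : ℤ := -((L : ℤ) - 1) - c with hs0def
  have hocc' : OccursAt w' w s0 := by
    intro t
    obtain ⟨n, h1, h2, h3, h4⟩ :=
      ((hw' (s0 + (t : ℤ))).and ((hb_tend (L - 1)).and ((hNe z).and hrev))).exists
    set j0 : ℤ := (b n : ℤ) - ((L : ℤ) - 1) - c with hj0def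
    have hqj0 : q ∣ j0 := by
      have d1 := hdvd n h4
      have heq : j0 = ((b n : ℤ) - r) + ((r - ((L : ℤ) - 1)) - c) := by ring
      rw [heq]; exact dvd_add d1 hcd
    have hbL : ((L : ℤ) - 1) ≤ (b n : ℤ) := by omega
    have hj0nn : 0 ≤ j0 := by
      have hgt : -q < j0 := by rw [hj0def]; linarith [hbL, hcq, hc0]
      obtain ⟨u, hu⟩ := hqj0
      have hgt2 : q * (-1) < q * u := by rw [hu] at hgt; linarith
      have hu1 : (-1 : ℤ) < u := lt_of_mul_lt_mul_left hgt2 (le_of_lt hq0)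
      rw [hu]
      exact mul_nonneg (le_of_lt hq0) (by omega)
    have htnn : (0 : ℤ) ≤ (t : ℤ) := Int.natCast_nonneg _
    have htlt : (t : ℤ) ≤ (L : ℤ) - 1 := by
      have := t.isLt; omega
    have e1 : w' (s0 + (t : ℤ)) = ys n (s0 + (t : ℤ)) := h1.symm
    have e2 : ys n (s0 + (t : ℤ)) = xs n (j0 + (t : ℤ)) := by
      show xs n (s0 + (t : ℤ) + b n) = xs n (j0 + (t : ℤ))
      rw [show s0 + (t : ℤ) + b n = j0 + (t : ℤ) by rw [hs0def, hj0def]; ring]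
    have e3 : xs n (j0 + (t : ℤ)) = z (j0 + (t : ℤ)) :=
      hb_agree n h3 _ (by omega) (by omega)
    have e4 : z (j0 + (t : ℤ)) = z (0 + (t : ℤ)) :=
      per_congr hqper (by rw [show j0 + (t : ℤ) - (0 + (t : ℤ)) = j0 by ring]; exact hqj0)
    rw [e1, e2, e3, e4]
    exact hz_occ t
  have hw'Y : w' ∈ Y := by rw [hY]; exact subset_closure ⟨hw'X, hw'ap⟩
  have hy2 : (fun i => w' (i + s0)) ∈ Y := Y_shift_inv hX_inv hY hw'Y s0
  apply hbad _ hy2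
  intro t
  show w' (0 + (t : ℤ) + s0) = w t
  have := hocc' t
  rwa [show (0 : ℤ) + (t : ℤ) + s0 = s0 + (t : ℤ) by ring]

lemma orb_fin {v : ℤ → A} {p : ℤ} (hp : 0 < p) (hper : ∀ i, v (i + p) = v i) :
    {u : ℤ → A | ∃ k : ℤ, u = fun i => v (i + k)}.Finite := by
  have hsub : {u : ℤ → A | ∃ k : ℤ, u = fun i => v (i + k)} ⊆
      (fun m : Fin p.toNat => fun i => v (i + (m : ℤ))) '' Set.univ := by
    rintro u ⟨k, rfl⟩
    have h1 : 0 ≤ k % p := Int.emod_nonneg _ (by omega)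
    have h2 : k % p < p := Int.emod_lt_of_pos _ hp
    refine ⟨⟨(k % p).toNat, by omega⟩, Set.mem_univ _, ?_⟩
    funext i
    show v (i + ((k % p).toNat : ℤ)) = v (i + k)
    rw [Int.toNat_of_nonneg h1]
    refine per_congr hper ?_
    have := Int.mul_ediv_add_emod k p
    exact ⟨-(k / p), by linarith [this]⟩
  exact (Set.finite_univ.image _).subset hsub

lemma claimA' (hX_cl : IsClosed X) (hX_inv : shift '' X = X)
    {Y : Set (ℤ → A)} (hY : Y = closure {x | x ∈ X ∧ IsAperiodic x})
    {L : ℕ} (hL : 0 < L) (w : Fin L → A)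
    (hbad : ∀ y ∈ Y, ¬ OccursAt y w 0) :
    {x | x ∈ X ∧ (∃ p : ℤ, 0 < p ∧ ∀ i, x (i + p) = x i) ∧ ∃ j, OccursAt x w j}.Finite := by
  have hfin := claimA hX_cl hX_inv hY hL w hbad
  refine Set.Finite.subset (hfin.biUnion (fun v hv =>
    (orb_fin hv.2.1.choose_spec.1 hv.2.1.choose_spec.2 : _))) ?_
  rintro x ⟨hxX, ⟨p, hp0, hper⟩, j, hocc⟩
  have hvX : (fun i => x (i + j)) ∈ X := shiftZ_mem hX_inv hxX j
  have hvper : ∃ p : ℤ, 0 < p ∧ ∀ i, (fun i => x (i + j)) (i + p) = (fun i => x (i + j)) i :=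
    ⟨p, hp0, fun i => by
      show x (i + p + j) = x (i + j)
      have := hper (i + j)
      rwa [show i + j + p = i + p + j by ring] at this⟩
  have hvocc : OccursAt (fun i => x (i + j)) w 0 := by
    intro t
    show x (0 + (t : ℤ) + j) = w t
    have := hocc t
    rwa [show (0 : ℤ) + (t : ℤ) + j = j + (t : ℤ) by ring]
  refine Set.mem_biUnion (⟨hvX, hvper, hvocc⟩ :
    (fun i => x (i + j)) ∈ {x | x ∈ X ∧ (∃ p : ℤ, 0 < p ∧ ∀ i, x (i + p) = x i) ∧ OccursAt x w 0}) ?_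
  exact ⟨-j, by funext i; show x i = x (i + -j + j); rw [show i + -j + j = i by ring]⟩

/-- Lemma M: an automorphism in the kernel moves only finitely many points. -/
lemma moved_finite (hX_cl : IsClosed X) (hX_inv : shift '' X = X)
    {Y : Set (ℤ → A)} (hY : Y = closure {x | x ∈ X ∧ IsAperiodic x})
    (φ : Equiv.Perm ↥X) (hφ : φ ∈ restKernel X Y) :
    {x : ↥X | φ x ≠ x}.Finite := by
  classical
  obtain ⟨hAut, hfixY⟩ := hφ
  obtain ⟨R, hR⟩ := exists_radius hX_cl φ hAut.1
  have hkey : ∀ x : ↥X, φ x ≠ x → ∃ w : Fin (2 * R + 1) → A,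
      (∀ y ∈ Y, ¬ OccursAt y w 0) ∧
      ((x : ℤ → A) ∈ X ∧ (∃ p : ℤ, 0 < p ∧ ∀ i, (x : ℤ → A) (i + p) = (x : ℤ → A) i) ∧
        ∃ j, OccursAt (x : ℤ → A) w j) := by
    intro x hx
    have hper : ¬ IsAperiodic (x : ℤ → A) := by
      intro hap
      exact hx (hfixY x (by rw [hY]; exact subset_closure ⟨x.2, hap⟩))
    rw [not_aperiodic_iff] at hper
    have hwin : ¬ ∀ j : ℤ, ∃ y ∈ Y, ∀ i : ℤ, |i| ≤ (R : ℤ) → y i = (x : ℤ → A) (j + i) := by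
      intro hall
      exact hx (fix_of_windows hX_cl hX_inv hY φ ⟨hAut, hfixY⟩ hR x hall)
    push_neg at hwin
    obtain ⟨j, hj⟩ := hwin
    refine ⟨fun i : Fin (2 * R + 1) => (x : ℤ → A) (j - R + (i : ℤ)), ?_, x.2, hper,
      j - R, fun t => rfl⟩
    intro y hyY hoccy
    have hy' : (fun i => y (i + (R : ℤ))) ∈ Y := Y_shift_inv hX_inv hY hyY R
    obtain ⟨i, hi, hne⟩ := hj _ hy'
    apply hne
    obtain ⟨hi1, hi2⟩ := abs_le.1 hi
    set t : Fin (2 * R + 1) := ⟨(i + R).toNat, by omega⟩ with ht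
    have hcast : ((t : ℕ) : ℤ) = i + R := by
      show ((i + (R : ℤ)).toNat : ℤ) = i + R
      exact Int.toNat_of_nonneg (by omega)
    have h5 := hoccy t
    simp only [hcast] at h5
    rw [show (0 : ℤ) + (i + (R : ℤ)) = i + (R : ℤ) by ring,
      show j - (R : ℤ) + (i + (R : ℤ)) = j + i by ring] at h5
    exact h5
  have hsub : {x : ↥X | φ x ≠ x} ⊆ ⋃ w : Fin (2 * R + 1) → A,
      {x : ↥X | (∀ y ∈ Y, ¬ OccursAt y w 0) ∧
        ((x : ℤ → A) ∈ X ∧ (∃ p : ℤ, 0 < p ∧ ∀ i, (x : ℤ → A) (i + p) = (x : ℤ → A) i) ∧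
          ∃ j, OccursAt (x : ℤ → A) w j)} := by
    intro x hx
    obtain ⟨w, h1, h2⟩ := hkey x hx
    exact Set.mem_iUnion.2 ⟨w, h1, h2⟩
  refine Set.Finite.subset (Set.finite_iUnion (fun w => ?_)) hsub
  by_cases hbad : ∀ y ∈ Y, ¬ OccursAt y w 0
  · have hfin := claimA' hX_cl hX_inv hY (by omega : 0 < 2 * R + 1) w hbad
    refine (hfin.preimage Subtype.val_injective.injOn).subset ?_
    intro x hx
    exact hx.2
  · refine Set.Finite.subset (Set.finite_empty) ?_
    intro x hx
    exact absurd hx.1 hbad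

/-- KG: a finite subset of the kernel generates a finite group, moving finitely many points. -/
lemma group_finite (hX_cl : IsClosed X) (hX_inv : shift '' X = X)
    {Y : Set (ℤ → A)} (hY : Y = closure {x | x ∈ X ∧ IsAperiodic x})
    (s : Set (Equiv.Perm ↥X)) (hsfin : s.Finite)
    (hsub : s ⊆ (restKernel X Y : Set (Equiv.Perm ↥X))) :
    {x : ↥X | ∃ ψ ∈ Subgroup.closure s, ψ x ≠ x}.Finite ∧
    ((Subgroup.closure s : Subgroup (Equiv.Perm ↥X)) : Set (Equiv.Perm ↥X)).Finite := by
  classical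
  set S := {x : ↥X | ∃ ψ ∈ Subgroup.closure s, ψ x ≠ x} with hSdef
  have hSsub : S ⊆ ⋃ ψ ∈ s, {x : ↥X | ψ x ≠ x} := by
    rintro x ⟨ψ, hψmem, hψx⟩
    by_contra hx
    simp only [Set.mem_iUnion, Set.mem_setOf_eq, not_exists, not_not] at hx
    have hle : Subgroup.closure s ≤ MulAction.stabilizer (Equiv.Perm ↥X) x := by
      rw [Subgroup.closure_le]
      intro g hg
      show g ∈ MulAction.stabilizer (Equiv.Perm ↥X) x
      rw [MulAction.mem_stabilizer_iff, Equiv.Perm.smul_def]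
      exact hx g hg
    have := hle hψmem
    rw [MulAction.mem_stabilizer_iff, Equiv.Perm.smul_def] at this
    exact hψx this
  have hSfin : S.Finite :=
    (hsfin.biUnion fun ψ hψ => moved_finite hX_cl hX_inv hY ψ (hsub hψ)).subset hSsub
  refine ⟨hSfin, ?_⟩
  have hid : ∀ ψ ∈ Subgroup.closure s, ∀ x : ↥X, x ∉ S → ψ x = x := by
    intro ψ hψ x hx
    by_contra h
    exact hx ⟨ψ, hψ, h⟩
  have hmapsto : ∀ ψ ∈ Subgroup.closure s, ∀ x ∈ S, ψ x ∈ S := by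
    intro ψ hψ x hxS
    by_contra hns
    have h1 : ψ⁻¹ (ψ x) = ψ x := hid ψ⁻¹ (inv_mem hψ) _ hns
    have h2 : ψ⁻¹ (ψ x) = x := Equiv.symm_apply_apply ψ x
    have hψx : ψ x = x := h1.symm.trans h2
    obtain ⟨ρ, hρ, hρx⟩ := hxS
    exact hns ⟨ρ, hρ, by rw [hψx]; exact hρx⟩
  rw [← Set.finite_coe_iff]
  haveI : Finite ↥S := hSfin.to_subtype
  set Θ : ((Subgroup.closure s : Subgroup (Equiv.Perm ↥X)) : Set (Equiv.Perm ↥X)) → (↥S → ↥S) :=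
    fun ψ => fun a => ⟨ψ.1 a.1, hmapsto ψ.1 ψ.2 a.1 a.2⟩ with hΘ
  have hinj : Function.Injective Θ := by
    intro ψ1 ψ2 heq
    apply Subtype.ext
    apply Equiv.ext
    intro x
    by_cases hx : x ∈ S
    · have := congrFun heq ⟨x, hx⟩
      exact congrArg Subtype.val this
    · rw [hid ψ1.1 ψ1.2 x hx, hid ψ2.1 ψ2.2 x hx]
  exact Finite.of_injective Θ hinj

lemma periodic_countable :
    {x : ℤ → A | ∃ p : ℤ, 0 < p ∧ ∀ i, x (i + p) = x i}.Countable := by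
  classical
  have hsub : {x : ℤ → A | ∃ p : ℤ, 0 < p ∧ ∀ i, x (i + p) = x i} ⊆
      ⋃ p : ℕ, {x : ℤ → A | ∀ i, x (i + ((p : ℤ) + 1)) = x i} := by
    rintro x ⟨p, hp0, hper⟩
    refine Set.mem_iUnion.2 ⟨(p - 1).toNat, ?_⟩
    intro i
    have hcast : (((p - 1).toNat : ℤ)) + 1 = p := by omega
    rw [hcast]
    exact hper i
  refine Set.Countable.mono hsub ?_
  apply Set.countable_iUnion
  intro p
  set q : ℤ := (p : ℤ) + 1 with hq
  have hq0 : 0 < q := by omega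
  rw [← Set.countable_coe_iff]
  haveI : Countable (Fin (p + 1) → A) := inferInstance
  apply Function.Injective.countable
    (f := fun x : {x : ℤ → A | ∀ i, x (i + q) = x i} => fun m : Fin (p + 1) => x.1 (m : ℤ))
  intro x y hxy
  apply Subtype.ext
  funext i
  have h1 : 0 ≤ i % q := Int.emod_nonneg _ (by omega)
  have h2 : i % q < q := Int.emod_lt_of_pos _ hq0
  set m : Fin (p + 1) := ⟨(i % q).toNat, by omega⟩ with hm
  have hcast : ((m : ℕ) : ℤ) = i % q := by
    show (((i % q).toNat : ℕ) : ℤ) = i % q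
    exact Int.toNat_of_nonneg h1
  have hdvd : q ∣ i - i % q := by
    have := Int.mul_ediv_add_emod i q
    exact ⟨i / q, by omega⟩
  have e1 : x.1 i = x.1 (i % q) := per_congr x.2 hdvd
  have e2 : y.1 i = y.1 (i % q) := per_congr y.2 hdvd
  have e3 := congrFun hxy m
  simp only at e3
  rw [hcast] at e3
  rw [e1, e2, e3]

lemma moved_periodic (hX_cl : IsClosed X) (hX_inv : shift '' X = X)
    {Y : Set (ℤ → A)} (hY : Y = closure {x | x ∈ X ∧ IsAperiodic x})
    (φ : Equiv.Perm ↥X) (hφ : φ ∈ restKernel X Y) (x : ↥X) (hx : φ x ≠ x) :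
    (∃ p : ℤ, 0 < p ∧ ∀ i, (x : ℤ → A) (i + p) = (x : ℤ → A) i) ∧
    (∃ p : ℤ, 0 < p ∧ ∀ i, (φ x : ℤ → A) (i + p) = (φ x : ℤ → A) i) := by
  obtain ⟨hAut, hfixY⟩ := hφ
  have hper : ¬ IsAperiodic (x : ℤ → A) := by
    intro hap
    exact hx (hfixY x (by rw [hY]; exact subset_closure ⟨x.2, hap⟩))
  rw [not_aperiodic_iff] at hper
  obtain ⟨p, hp0, hp⟩ := hper
  refine ⟨⟨p, hp0, hp⟩, p, hp0, ?_⟩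
  have := aut_equivariant hX_inv φ hAut p x x (fun i => (hp i).symm)
  intro i
  exact (this i).symm

lemma kernel_countable (hX_cl : IsClosed X) (hX_inv : shift '' X = X)
    {Y : Set (ℤ → A)} (hY : Y = closure {x | x ∈ X ∧ IsAperiodic x}) :
    Countable ↥(restKernel X Y) := by
  classical
  set P : Set ↥X := {x : ↥X | ∃ p : ℤ, 0 < p ∧ ∀ i, (x : ℤ → A) (i + p) = (x : ℤ → A) i}
    with hPdef
  have hPc : P.Countable := by
    have : P = Subtype.val ⁻¹' {x : ℤ → A | ∃ p : ℤ, 0 < p ∧ ∀ i, x (i + p) = x i} := rfl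
    rw [this]
    exact Set.Countable.preimage periodic_countable Subtype.val_injective
  have hQc : {t : Set (↥X × ↥X) | t.Finite ∧ t ⊆ P ×ˢ P}.Countable :=
    Set.countable_setOf_finite_subset (hPc.prod hPc)
  set G : ↥(restKernel X Y) → Set (↥X × ↥X) :=
    fun φ => {ab : ↥X × ↥X | (φ : Equiv.Perm ↥X) ab.1 = ab.2 ∧ ab.1 ≠ ab.2} with hGdef
  have hGmem : ∀ φ, G φ ∈ {t : Set (↥X × ↥X) | t.Finite ∧ t ⊆ P ×ˢ P} := by
    intro φ
    constructor
    · have hmoved := moved_finite hX_cl hX_inv hY (φ : Equiv.Perm ↥X) φ.2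
      refine ((hmoved.image (fun a => (a, (φ : Equiv.Perm ↥X) a))).subset ?_ : _)
      rintro ⟨a, b⟩ ⟨heq, hne⟩
      simp only at heq hne
      refine ⟨a, ?_, ?_⟩
      · show (φ : Equiv.Perm ↥X) a ≠ a
        rw [heq]; exact fun h => hne h.symm
      · show (a, (φ : Equiv.Perm ↥X) a) = (a, b)
        rw [heq]
    · rintro ⟨a, b⟩ ⟨heq, hne⟩
      simp only at heq hne
      have hmv : (φ : Equiv.Perm ↥X) a ≠ a := by rw [heq]; exact fun h => hne h.symm
      obtain ⟨h1, h2⟩ := moved_periodic hX_cl hX_inv hY (φ : Equiv.Perm ↥X) φ.2 a hmv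
      refine ⟨h1, ?_⟩
      rw [← heq]
      exact h2
  have hGinj : Function.Injective G := by
    intro φ1 φ2 heq
    apply Subtype.ext
    apply Equiv.ext
    intro x
    by_cases h1 : (φ1 : Equiv.Perm ↥X) x = x
    · by_cases h2 : (φ2 : Equiv.Perm ↥X) x = x
      · rw [h1, h2]
      · have : (x, (φ2 : Equiv.Perm ↥X) x) ∈ G φ2 := ⟨rfl, fun h => h2 h.symm⟩
        rw [← heq] at this
        exact this.1
    · have : (x, (φ1 : Equiv.Perm ↥X) x) ∈ G φ1 := ⟨rfl, fun h => h1 h.symm⟩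
      rw [heq] at this
      exact this.1.symm
  haveI := hQc.to_subtype
  exact Function.Injective.countable
    (f := fun φ : ↥(restKernel X Y) => (⟨G φ, hGmem φ⟩ : {t : Set (↥X × ↥X) | t.Finite ∧ t ⊆ P ×ˢ P}))
    (fun a b h => hGinj (congrArg Subtype.val h))

lemma closure_finite_in_kernel (hX_cl : IsClosed X) (hX_inv : shift '' X = X)
    {Y : Set (ℤ → A)} (hY : Y = closure {x | x ∈ X ∧ IsAperiodic x})
    (T : Set ↥(restKernel X Y)) (hT : T.Finite) :
    ((Subgroup.closure T : Subgroup ↥(restKernel X Y)) : Set ↥(restKernel X Y)).Finite := by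
  set ι : ↥(restKernel X Y) →* Equiv.Perm ↥X := (restKernel X Y).subtype with hι
  have himg : (⇑ι '' T) ⊆ (restKernel X Y : Set (Equiv.Perm ↥X)) := by
    rintro _ ⟨ψ, hψ, rfl⟩
    exact ψ.2
  have h2 := (group_finite hX_cl hX_inv hY (⇑ι '' T) (hT.image ⇑ι) himg).2
  have hmap : Subgroup.map ι (Subgroup.closure T) = Subgroup.closure (⇑ι '' T) :=
    MonoidHom.map_closure ι T
  have h3 : (⇑ι '' ↑(Subgroup.closure T)).Finite := by
    rw [← Subgroup.coe_map, hmap]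
    exact h2
  have hinj : Function.Injective ⇑ι := Subgroup.subtype_injective _
  exact Set.Finite.of_finite_image h3 hinj.injOn

lemma kernel_folner (hX_cl : IsClosed X) (hX_inv : shift '' X = X)
    {Y : Set (ℤ → A)} (hY : Y = closure {x | x ∈ X ∧ IsAperiodic x}) :
    FolnerAmenable ↥(restKernel X Y) := by
  classical
  haveI := kernel_countable hX_cl hX_inv hY
  haveI : Nonempty ↥(restKernel X Y) := ⟨1⟩
  obtain ⟨e, he⟩ := exists_surjective_nat ↥(restKernel X Y)
  refine ⟨fun k => ↑(Subgroup.closure (e '' Set.Iic k)), ?_, ?_, ?_⟩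
  · intro k
    exact closure_finite_in_kernel hX_cl hX_inv hY _ ((Set.finite_Iic k).image e)
  · intro g
    obtain ⟨n, rfl⟩ := he g
    rw [Filter.eventually_atTop]
    exact ⟨n, fun k hk => Subgroup.subset_closure ⟨n, Set.mem_Iic.2 hk, rfl⟩⟩
  · intro g
    obtain ⟨n, rfl⟩ := he g
    have hev : ∀ᶠ k in Filter.atTop,
        (0 : ℝ) = ((symmDiff ((e n) • (↑(Subgroup.closure (e '' Set.Iic k)) : Set ↥(restKernel X Y)))
          (↑(Subgroup.closure (e '' Set.Iic k)) : Set ↥(restKernel X Y))).ncard : ℝ) /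
          ((↑(Subgroup.closure (e '' Set.Iic k)) : Set ↥(restKernel X Y)).ncard : ℝ) := by
      rw [Filter.eventually_atTop]
      refine ⟨n, fun k hk => ?_⟩
      have hmem : e n ∈ Subgroup.closure (e '' Set.Iic k) :=
        Subgroup.subset_closure ⟨n, Set.mem_Iic.2 hk, rfl⟩
      have hsmul : (e n) • (↑(Subgroup.closure (e '' Set.Iic k)) : Set ↥(restKernel X Y)) =
          ↑(Subgroup.closure (e '' Set.Iic k)) := by
        ext h
        rw [Set.mem_smul_set_iff_inv_smul_mem]
        constructor
        · intro hh
          have := mul_mem hmem hh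
          rwa [smul_eq_mul, ← mul_assoc, mul_inv_cancel, one_mul] at this
        · intro hh
          rw [smul_eq_mul]
          exact mul_mem (inv_mem hmem) hh
      rw [hsmul, symmDiff_self]
      show (0 : ℝ) = ((⊥ : Set ↥(restKernel X Y)).ncard : ℝ) / _
      rw [Set.bot_eq_empty, Set.ncard_empty]
      simp
    exact Filter.Tendsto.congr' hev tendsto_const_nhds


end Main

/-- Let `Y` be the closure of the aperiodic points of `X`, and let `φ₁, …, φ_m ∈ Aut(X)`
restrict to the identity on `Y`.  Then `S = {x ∈ X : ψ(x) ≠ x for some ψ ∈ ⟨φ₁, …, φ_m⟩}`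
is finite and `⟨φ₁, …, φ_m⟩` is finite.  In particular, the kernel of the restriction
homomorphism `Aut(X) → Aut(Y)` is locally finite, hence amenable. -/
theorem restKernel_locallyFinite_amenable {A : Type*} [Fintype A] [TopologicalSpace A]
    [DiscreteTopology A] (X : Set (ℤ → A)) (hX_cl : IsClosed X) (hX_inv : shift '' X = X)
    (Y : Set (ℤ → A)) (hY : Y = closure {x | x ∈ X ∧ IsAperiodic x})
    (m : ℕ) (φ : Fin m → Equiv.Perm ↥X) (hφ : ∀ i, φ i ∈ restKernel X Y) :
    {x : ↥X | ∃ ψ ∈ Subgroup.closure (Set.range φ), ψ x ≠ x}.Finite ∧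
    ((Subgroup.closure (Set.range φ) : Subgroup (Equiv.Perm ↥X)) :
      Set (Equiv.Perm ↥X)).Finite ∧
    (∀ s : Finset (Equiv.Perm ↥X), (↑s : Set (Equiv.Perm ↥X)) ⊆ (restKernel X Y : Set _) →
      ((Subgroup.closure (↑s : Set (Equiv.Perm ↥X)) : Subgroup (Equiv.Perm ↥X)) :
        Set (Equiv.Perm ↥X)).Finite) ∧
    FolnerAmenable ↥(restKernel X Y) := by
  classical
  have hφsub : Set.range φ ⊆ (restKernel X Y : Set (Equiv.Perm ↥X)) := by
    rintro _ ⟨i, rfl⟩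
    exact hφ i
  obtain ⟨h1, h2⟩ := group_finite hX_cl hX_inv hY (Set.range φ) (Set.finite_range φ) hφsub
  refine ⟨h1, h2, ?_, ?_⟩
  · intro s hs
    exact (group_finite hX_cl hX_inv hY (↑s) s.finite_toSet hs).2
  · exact kernel_folner hX_cl hX_inv hY
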